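/- arXiv:1705.02041 — 3 statements merged into one kernel-verified Lean document; each statement's English description precedes it below -/
import Mathlib

section
/- Let p ≠ 0, q > 0, ν ∈ ℝ with ν·q/p ≥ 0 (so the radicand is nonnegative). Set a = (1/2)·√2·√(1/q) and A = √(3·√2·√(1/q)·ν·q/p). Then U(ξ) = A·tanh(ξ) satisfies the ODE −ν·U + (1/3)·p·a·U³ − q·ν·a²·U'' = 0 for all ξ ∈ ℝ. -/
lemma tanh_hasDerivAt' (x : ℝ) : HasDerivAt Real.tanh (1 - Real.tanh x ^ 2) x := by
  have hc : Real.cosh x ≠ 0 := (Real.cosh_pos x).ne'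
  have h := (Real.hasDerivAt_sinh x).div (Real.hasDerivAt_cosh x) hc
  have heq : (Real.cosh x * Real.cosh x - Real.sinh x * Real.sinh x) / Real.cosh x ^ 2
      = 1 - Real.tanh x ^ 2 := by
    rw [Real.tanh_eq_sinh_div_cosh]
    have h1 : Real.cosh x ^ 2 - Real.sinh x ^ 2 = 1 := Real.cosh_sq_sub_sinh_sq x
    field_simp
  rw [heq] at h
  have : (fun y => Real.sinh y / Real.cosh y) = Real.tanh := by
    funext y; rw [Real.tanh_eq_sinh_div_cosh]
  exact (show Real.sinh / Real.cosh = Real.tanh from this) ▸ h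

theorem fmEW_explicit_solution (p q ν : ℝ) (hp : p ≠ 0) (hq : 0 < q)
    (hrad : 0 ≤ ν * q / p) :
    let a := (1/2) * Real.sqrt 2 * Real.sqrt (1/q)
    let A := Real.sqrt (3 * Real.sqrt 2 * Real.sqrt (1/q) * ν * q / p)
    ∀ ξ : ℝ, -ν * (A * Real.tanh ξ) + (1/3) * p * a * (A * Real.tanh ξ)^3
      - q * ν * a^2 * iteratedDeriv 2 (fun s => A * Real.tanh s) ξ = 0 := by
  intro a A ξ
  have h2 : (Real.sqrt 2) ^ 2 = 2 := Real.sq_sqrt (by norm_num)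
  have hqinv : (Real.sqrt (1/q)) ^ 2 = 1/q := Real.sq_sqrt (by positivity)
  -- second derivative
  have hd1 : deriv (fun s => A * Real.tanh s) = fun s => A * (1 - Real.tanh s ^ 2) := by
    funext s
    exact ((tanh_hasDerivAt' s).const_mul A).deriv
  have hd2 : iteratedDeriv 2 (fun s => A * Real.tanh s) ξ
      = A * (0 - 2 * Real.tanh ξ ^ 1 * (1 - Real.tanh ξ ^ 2)) := by
    rw [show (2:ℕ) = 1 + 1 from rfl, iteratedDeriv_succ, iteratedDeriv_one, hd1]
    exact (((hasDerivAt_const ξ (1:ℝ)).sub ((tanh_hasDerivAt' ξ).pow 2)).const_mul A).deriv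
  rw [hd2]
  -- algebra
  have hqa : q * a ^ 2 = 1/2 := by
    show q * ((1/2) * Real.sqrt 2 * Real.sqrt (1/q)) ^ 2 = 1/2
    have : ((1/2) * Real.sqrt 2 * Real.sqrt (1/q)) ^ 2
        = (1/4) * (Real.sqrt 2)^2 * (Real.sqrt (1/q))^2 := by ring
    rw [this, h2, hqinv]
    field_simp
    ring
  have hA2 : p * a * A ^ 2 = 3 * ν := by
    have hradnn : 0 ≤ 3 * Real.sqrt 2 * Real.sqrt (1/q) * ν * q / p := by
      have : 3 * Real.sqrt 2 * Real.sqrt (1/q) * ν * q / p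
          = (3 * Real.sqrt 2 * Real.sqrt (1/q)) * (ν * q / p) := by ring
      rw [this]
      exact mul_nonneg (by positivity) hrad
    have hAsq : A ^ 2 = 3 * Real.sqrt 2 * Real.sqrt (1/q) * ν * q / p :=
      Real.sq_sqrt hradnn
    show p * ((1/2) * Real.sqrt 2 * Real.sqrt (1/q)) * A ^ 2 = 3 * ν
    have heq : p * ((1/2) * Real.sqrt 2 * Real.sqrt (1/q)) * (3 * Real.sqrt 2 * Real.sqrt (1/q) * ν * q / p)
        = (3/2) * (Real.sqrt 2)^2 * (Real.sqrt (1/q))^2 * ν * q * (p/p) := by ring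
    rw [hAsq, heq, h2, hqinv, div_self hp]
    field_simp
  set T := Real.tanh ξ
  linear_combination ((1/3) * A * T^3) * hA2 + (2 * ν * A * T * (1 - T^2)) * hqa
end

section
/- Let p, q, ν ∈ ℝ with q ≠ 0, p/q ≤ 0 and ν² + p/2 ≥ 0. Set A = √(−p/q) and a = √(ν² + p/2). Then U(ξ) = A·tanh(ξ) satisfies ν²·U''(ξ) − a²·U''(ξ) − p·U(ξ) − q·U(ξ)³ = 0 for all ξ ∈ ℝ. -/
theorem fKG_tanh_solution (p q ν : ℝ) (hq : q ≠ 0) (hpq : p / q ≤ 0)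
    (hν : 0 ≤ ν^2 + p/2) :
    let A := Real.sqrt (-p/q)
    let a := Real.sqrt (ν^2 + p/2)
    ∀ ξ : ℝ, ν^2 * iteratedDeriv 2 (fun s => A * Real.tanh s) ξ
      - a^2 * iteratedDeriv 2 (fun s => A * Real.tanh s) ξ
      - p * (A * Real.tanh ξ) - q * (A * Real.tanh ξ)^3 = 0 := by
  intro A a ξ
  have ha : a ^ 2 = ν^2 + p/2 := Real.sq_sqrt hν
  have hA : q * A ^ 2 = -p := by
    have h0 : (0:ℝ) ≤ -p/q := by
      rw [neg_div]; linarith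
    have : A ^ 2 = -p/q := Real.sq_sqrt h0
    rw [this]; field_simp
  have hd1 : deriv (fun s => A * Real.tanh s) =
      fun x => A * (1 - Real.tanh x ^ 2) := by
    funext x
    exact ((tanh_hasDerivAt' x).const_mul A).deriv
  have hd2 : iteratedDeriv 2 (fun s => A * Real.tanh s) ξ =
      A * (-(2 * Real.tanh ξ * (1 - Real.tanh ξ ^ 2))) := by
    rw [iteratedDeriv_succ, iteratedDeriv_one, hd1]
    have : HasDerivAt (fun x => A * (1 - Real.tanh x ^ 2))
        (A * (-(2 * Real.tanh ξ * (1 - Real.tanh ξ ^ 2)))) ξ := by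
      have h2 : HasDerivAt (fun x => Real.tanh x ^ 2)
          (2 * Real.tanh ξ * (1 - Real.tanh ξ ^ 2)) ξ := by
        have := (tanh_hasDerivAt' ξ).pow 2
        exact this.congr_deriv (by norm_num [mul_assoc])
      simpa using ((hasDerivAt_const ξ (1:ℝ)).sub h2).const_mul A
    exact this.deriv
  rw [hd2]
  set t := Real.tanh ξ
  linear_combination (-(A * (-(2 * t * (1 - t ^ 2))))) * ha + (-(A * t^3)) * hA
end

section
/- Let p, q, ν ∈ ℝ with q ≠ 0 and p/q ≤ 0, and suppose ν² + p/2 ≥ 0. Then for α ∈ (0,1], the function u(x,t) = √(−p/q)·tanh(√(ν² + p/2)·x − ν·t^α/α) satisfies, for all x ∈ ℝ and t > 0, the equation D^{2α}_t u − u_{xx} − p·u − q·u³ = 0, where D^{2α}_t u = D^α_t(D^α_t u) with D^α_t w = t^{1−α}·∂w/∂t. -/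
private lemma hasDerivAt_tanh' (y : ℝ) :
    HasDerivAt Real.tanh (1 / Real.cosh y ^ 2) y := by
  have h := (Real.hasDerivAt_sinh y).div (Real.hasDerivAt_cosh y)
    (ne_of_gt (Real.cosh_pos y))
  have h2 : Real.cosh y * Real.cosh y - Real.sinh y * Real.sinh y = 1 := by
    nlinarith [Real.cosh_sq_sub_sinh_sq y]
  rw [h2] at h
  have he : Real.tanh = fun z => Real.sinh z / Real.cosh z :=
    funext fun z => Real.tanh_eq_sinh_div_cosh z
  rw [he]
  exact h

theorem fKG_explicit_solution (p q ν α : ℝ) (hq : q ≠ 0) (hpq : p / q ≤ 0)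
    (hν : 0 ≤ ν^2 + p/2) (hα : α ∈ Set.Ioc (0:ℝ) 1) :
    let u : ℝ → ℝ → ℝ := fun x t =>
      Real.sqrt (-p/q) * Real.tanh (Real.sqrt (ν^2 + p/2) * x - ν * t ^ α / α)
    ∀ x t : ℝ, 0 < t →
      t ^ (1 - α) * deriv (fun s : ℝ => s ^ (1 - α) * deriv (fun r : ℝ => u x r) s) t
        - iteratedDeriv 2 (fun z : ℝ => u z t) x
        - p * u x t - q * (u x t)^3 = 0 := by
  intro u x t ht
  obtain ⟨hα0, hα1⟩ := hα
  set a := Real.sqrt (-p/q) with ha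
  set b := Real.sqrt (ν^2 + p/2) with hb
  have ha2 : a ^ 2 = -p/q := Real.sq_sqrt (by rw [neg_div]; linarith)
  have hb2 : b ^ 2 = ν^2 + p/2 := Real.sq_sqrt hν
  have hg : ∀ s : ℝ, 0 < s →
      HasDerivAt (fun r : ℝ => b * x - ν * r ^ α / α) (-(ν * s ^ (α - 1))) s := by
    intro s hs
    have h1 : HasDerivAt (fun r : ℝ => r ^ α) (α * s ^ (α - 1)) s :=
      Real.hasDerivAt_rpow_const (Or.inl hs.ne')
    have h2 := ((h1.const_mul ν).div_const α).const_sub (b * x)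
    refine h2.congr_deriv ?_
    field_simp [hα0.ne']
  set g : ℝ → ℝ := fun s => b * x - ν * s ^ α / α with hgdef
  have hut : ∀ s : ℝ, 0 < s →
      HasDerivAt (fun r : ℝ => u x r)
        (a * (1 / Real.cosh (g s) ^ 2 * -(ν * s ^ (α - 1)))) s := by
    intro s hs
    exact (((hasDerivAt_tanh' (g s)).comp s (hg s hs)).const_mul a)
  set G : ℝ → ℝ := fun s => -(a * ν) * (Real.cosh (g s) ^ 2)⁻¹ with hG
  have hFG : (fun s : ℝ => s ^ (1 - α) * deriv (fun r : ℝ => u x r) s) =ᶠ[nhds t] G := by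
    filter_upwards [Ioi_mem_nhds ht] with s hs
    have hs : (0:ℝ) < s := hs
    rw [(hut s hs).deriv]
    have hpow : s ^ (1 - α) * s ^ (α - 1) = 1 := by
      rw [← Real.rpow_add hs]; norm_num
    calc s ^ (1 - α) * (a * (1 / Real.cosh (g s) ^ 2 * -(ν * s ^ (α - 1))))
        = (s ^ (1 - α) * s ^ (α - 1)) * (-(a * ν) * (Real.cosh (g s) ^ 2)⁻¹) := by ring
      _ = G s := by rw [hpow, one_mul]
  have hcosh : HasDerivAt (fun s : ℝ => Real.cosh (g s) ^ 2)
      (2 * Real.cosh (g t) * (Real.sinh (g t) * -(ν * t ^ (α - 1)))) t := by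
    have h1 : HasDerivAt (fun s : ℝ => Real.cosh (g s))
        (Real.sinh (g t) * -(ν * t ^ (α - 1))) t :=
      (Real.hasDerivAt_cosh (g t)).comp t (hg t ht)
    have := h1.fun_pow 2
    refine this.congr_deriv ?_
    ring
  have hC : Real.cosh (g t) ^ 2 ≠ 0 := by positivity
  have hGd : HasDerivAt G
      (-(a * ν) * (-(2 * Real.cosh (g t) * (Real.sinh (g t) * -(ν * t ^ (α - 1))))
        / (Real.cosh (g t) ^ 2) ^ 2)) t := (hcosh.inv hC).const_mul _
  have hderivF : deriv (fun s : ℝ => s ^ (1 - α) * deriv (fun r : ℝ => u x r) s) t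
      = -(a * ν) * (-(2 * Real.cosh (g t) * (Real.sinh (g t) * -(ν * t ^ (α - 1))))
        / (Real.cosh (g t) ^ 2) ^ 2) := by
    rw [hFG.deriv_eq, hGd.deriv]
  -- spatial derivatives
  have hux : ∀ z : ℝ, HasDerivAt (fun w : ℝ => u w t)
      (a * (1 / Real.cosh (b * z - ν * t ^ α / α) ^ 2 * b)) z := by
    intro z
    have hlin : HasDerivAt (fun w : ℝ => b * w - ν * t ^ α / α) b z := by
      simpa using ((hasDerivAt_id z).const_mul b).sub_const (ν * t ^ α / α)
    exact ((hasDerivAt_tanh' _).comp z hlin).const_mul a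
  have hux1 : deriv (fun z : ℝ => u z t)
      = fun z => (a * b) * (Real.cosh (b * z - ν * t ^ α / α) ^ 2)⁻¹ := by
    funext z; rw [(hux z).deriv]; ring
  have hCx : Real.cosh (b * x - ν * t ^ α / α) ^ 2 ≠ 0 := by positivity
  have hux2 : HasDerivAt (fun z : ℝ => (a * b) * (Real.cosh (b * z - ν * t ^ α / α) ^ 2)⁻¹)
      ((a * b) * (-(2 * Real.cosh (b * x - ν * t ^ α / α)
        * (Real.sinh (b * x - ν * t ^ α / α) * b)) / (Real.cosh (b * x - ν * t ^ α / α) ^ 2) ^ 2)) x := by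
    have hlin : HasDerivAt (fun w : ℝ => b * w - ν * t ^ α / α) b x := by
      simpa using ((hasDerivAt_id x).const_mul b).sub_const (ν * t ^ α / α)
    have h1 : HasDerivAt (fun z : ℝ => Real.cosh (b * z - ν * t ^ α / α) ^ 2)
        (2 * Real.cosh (b * x - ν * t ^ α / α) * (Real.sinh (b * x - ν * t ^ α / α) * b)) x := by
      have := ((Real.hasDerivAt_cosh _).comp x hlin).fun_pow 2
      refine this.congr_deriv ?_
      simp [Function.comp]
    exact (h1.inv hCx).const_mul (a * b)
  have hiter : iteratedDeriv 2 (fun z : ℝ => u z t) x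
      = (a * b) * (-(2 * Real.cosh (b * x - ν * t ^ α / α)
        * (Real.sinh (b * x - ν * t ^ α / α) * b)) / (Real.cosh (b * x - ν * t ^ α / α) ^ 2) ^ 2) := by
    rw [show (2:ℕ) = 1 + 1 from rfl, iteratedDeriv_succ, iteratedDeriv_one, hux1]
    exact hux2.deriv
  -- assemble
  rw [hderivF, hiter]
  simp only [hgdef]
  set C := Real.cosh (b * x - ν * t ^ α / α) with hCdef
  set S := Real.sinh (b * x - ν * t ^ α / α) with hSdef
  have hCS : C ^ 2 - S ^ 2 = 1 := Real.cosh_sq_sub_sinh_sq _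
  have hCpos : 0 < C := Real.cosh_pos _
  have hC0 : C ≠ 0 := hCpos.ne'
  have hpow : t ^ (1 - α) * t ^ (α - 1) = 1 := by
    rw [← Real.rpow_add ht]; norm_num
  have htanh : Real.tanh (b * x - ν * t ^ α / α) = S / C := Real.tanh_eq_sinh_div_cosh _
  show t ^ (1 - α) * _ - _ - p * (a * Real.tanh (b * x - ν * t ^ α / α))
      - q * (a * Real.tanh (b * x - ν * t ^ α / α)) ^ 3 = 0
  rw [htanh]
  have hqa : q * a ^ 3 = -(p * a) := by
    have h1 : q * a ^ 3 = q * a ^ 2 * a := by ring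
    rw [h1, ha2]; field_simp
  have key : t ^ (1 - α) * (-(a * ν) * (-(2 * C * (S * -(ν * t ^ (α - 1)))) / (C ^ 2) ^ 2))
      = (t ^ (1 - α) * t ^ (α - 1)) * (-(2 * a * ν ^ 2) * (C * S) / (C ^ 2) ^ 2) := by
    ring
  rw [key, hpow, one_mul]
  have hbb : b ^ 2 = ν ^ 2 + p / 2 := hb2
  field_simp
  linear_combination (2*a*S) * hbb - (S^3) * hqa - (p*a*S) * hCS
end
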